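/- Let n ≥ 1 be an integer, let Q be a monic real polynomial of degree n, and let c ∈ ℝ. Setting t_N = N·ln N + c·N, one has Q(N)·exp(−t_N·Q′(N)/Q(N)) → e^{-cn} as N → ∞ (N ranging over the positive integers; note that Q(N) > 0 for all sufficiently large N, so the expression is eventually well defined). -/

import Mathlib

open MeasureTheory Polynomial Filter

/-- The orthogonal polynomials `Q_n^s`: `Q_0 = 1`, `Q_1 = X`,
`X * Q_n = Q_{n+1} + √s * Q_n + Q_{n-1}`. -/
noncomputable def Qpoly (s : ℕ) : ℕ → Polynomial ℝ
  | 0 => 1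
  | 1 => Polynomial.X
  | (n + 2) => Polynomial.X * Qpoly s (n + 1)
      - Polynomial.C (Real.sqrt s) * Qpoly s (n + 1) - Qpoly s n

/-- Chebyshev polynomials of the second kind: `P_0 = 1`, `P_1 = X`,
`X * P_n = P_{n+1} + P_{n-1}`. -/
noncomputable def Ppoly : ℕ → Polynomial ℝ
  | 0 => 1
  | 1 => Polynomial.X
  | (n + 2) => Polynomial.X * Ppoly (n + 1) - Ppoly n

/-- The density of the absolutely continuous part of `ν_s`. -/
noncomputable def nuDensity (s : ℕ) (x : ℝ) : ℝ :=
  Real.sqrt (4 - (x - Real.sqrt s) ^ 2) / (2 * Real.pi * (x * Real.sqrt s + 1))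

/-- The free Meixner measure `ν_s`. -/
noncomputable def nuMeas (s : ℕ) : Measure ℝ :=
  volume.withDensity (fun x => ENNReal.ofReal
      (if |x - Real.sqrt s| ≤ 2 then nuDensity s x else 0))
    + ENNReal.ofReal (1 - 1 / (s : ℝ)) • Measure.dirac (-1 / Real.sqrt s)

/-- The density `f_c`. -/
noncomputable def fc (s : ℕ) (c x : ℝ) : ℝ :=
  (Real.exp c + Real.sqrt s) / (Real.exp c + Real.exp (-c) + Real.sqrt s - x)

/-- The measure `η_c^s = f_c · ν_s + 1_{c<0} ((e^{-c}-e^c)/(e^{-c}+√s)) δ_{e^c+√s+e^{-c}}`. -/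
noncomputable def etaMeas (s : ℕ) (c : ℝ) : Measure ℝ :=
  (nuMeas s).withDensity (fun x => ENNReal.ofReal (fc s c x))
    + (if c < 0 then
        ENNReal.ofReal ((Real.exp (-c) - Real.exp c) / (Real.exp (-c) + Real.sqrt s))
      else 0) • Measure.dirac (Real.exp c + Real.sqrt s + Real.exp (-c))

/-- Total variation distance between two Borel measures on `ℝ`. -/
noncomputable def dTV (μ ν : Measure ℝ) : ℝ :=
  ⨆ A : {A : Set ℝ // MeasurableSet A}, |(μ A.1).toReal - (ν A.1).toReal|

/-- For a monic polynomial `Q` of degree `n ≥ 1` and `t_N = N ln N + c N`, one has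
`Q(N) exp(-t_N Q'(N)/Q(N)) → e^{-cn}`. -/
theorem stmt6 (n : ℕ) (hn : 1 ≤ n) (Q : Polynomial ℝ) (hQ : Q.Monic)
    (hdeg : Q.natDegree = n) (c : ℝ) :
    Filter.Tendsto
      (fun N : ℕ => Q.eval (N : ℝ) *
        Real.exp (-((N * Real.log N + c * N) *
          ((Polynomial.derivative Q).eval (N : ℝ) / Q.eval (N : ℝ)))))
      Filter.atTop (nhds (Real.exp (-(c * n)))) := by
  obtain ⟨m, rfl⟩ : ∃ m, n = m + 1 := ⟨n - 1, (Nat.succ_pred_eq_of_pos hn).symm⟩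
  set n := m + 1 with hn'
  have hQ0 : Q ≠ 0 := hQ.ne_zero
  have hdegQ : Q.degree = (n : WithBot ℕ) := by
    rw [Polynomial.degree_eq_natDegree hQ0, hdeg]
  have hdQdeg : (derivative Q).degree = (m : WithBot ℕ) := by
    rw [Polynomial.degree_derivative_eq Q (by omega), hdeg]
    norm_cast
  have hdQnat : (derivative Q).natDegree = m :=
    Polynomial.natDegree_eq_of_degree_eq_some hdQdeg
  have hdQlead : (derivative Q).leadingCoeff = (n : ℝ) := by
    rw [Polynomial.leadingCoeff, hdQnat, Polynomial.coeff_derivative]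
    have hc : Q.coeff (m + 1) = 1 := by
      have := hQ.leadingCoeff
      rwa [Polynomial.leadingCoeff, hdeg] at this
    rw [hc, hn']; push_cast; ring
  have hne : (n : ℝ) ≠ 0 := by positivity
  set P : Polynomial ℝ := X * derivative Q - C (n : ℝ) * Q with hP
  have hd1 : (X * derivative Q : ℝ[X]).degree = (n : WithBot ℕ) := by
    rw [Polynomial.degree_mul, Polynomial.degree_X, hdQdeg, hn']
    norm_cast
    omega
  have hd2 : (C (n : ℝ) * Q).degree = (n : WithBot ℕ) := by
    rw [Polynomial.degree_C_mul hne, hdegQ]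
  have hPdeg : P.degree < Q.degree := by
    have h := Polynomial.degree_sub_lt (hd1.trans hd2.symm)
      (by intro h; rw [h] at hd1; simp at hd1)
      (by rw [Polynomial.leadingCoeff_mul, Polynomial.leadingCoeff_X,
            Polynomial.leadingCoeff_mul, Polynomial.leadingCoeff_C, hdQlead,
            hQ.leadingCoeff]; ring)
    rw [hd1] at h; rw [hdegQ]; exact h
  have hB : Tendsto (fun x : ℝ => P.eval x / Q.eval x) atTop (nhds 0) :=
    Polynomial.div_tendsto_zero_of_degree_lt P Q hPdeg
  -- log x * (P/Q) → 0
  have hP_O : (fun x : ℝ => P.eval x) =O[atTop] fun x : ℝ => Polynomial.eval x (X ^ m : ℝ[X]) := by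
    apply Polynomial.isBigO_of_degree_le
    rw [Polynomial.degree_X_pow]
    rcases eq_or_ne P 0 with h | h
    · rw [h, Polynomial.degree_zero]; exact bot_le
    · rw [Polynomial.degree_eq_natDegree h]
      have : P.natDegree < n := by
        have := hPdeg
        rw [hdegQ, Polynomial.degree_eq_natDegree h] at this
        exact_mod_cast this
      exact_mod_cast Nat.lt_succ_iff.mp this
  have hlittle : (fun x : ℝ => Real.log x * P.eval x) =o[atTop] fun x : ℝ => Q.eval x := by
    have h1 := Real.isLittleO_log_id_atTop.mul_isBigO hP_O
    have h2 : (fun x : ℝ => 1 * x ^ n) =O[atTop] fun x : ℝ => Q.eval x := by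
      have := (Polynomial.isEquivalent_atTop_lead Q).symm.isBigO
      rwa [hQ.leadingCoeff, hdeg] at this
    refine (h1.congr_right ?_).trans_isBigO h2
    intro x; simp [pow_succ', hn']
  have hlogB : Tendsto (fun x : ℝ => Real.log x * (P.eval x / Q.eval x)) atTop (nhds 0) := by
    have := hlittle.tendsto_div_nhds_zero
    refine this.congr fun x => ?_
    rw [mul_div_assoc]
  -- Q(x)/x^n → 1
  have hA : Tendsto (fun x : ℝ => Q.eval x / x ^ n) atTop (nhds 1) := by
    have h := Polynomial.div_tendsto_leadingCoeff_div_of_degree_eq Q (X ^ n : ℝ[X])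
      (by rw [hdegQ, Polynomial.degree_X_pow])
    simp only [Polynomial.eval_pow, Polynomial.eval_X, hQ.leadingCoeff,
      Polynomial.leadingCoeff_X_pow, div_one] at h
    exact h
  have hA' : Tendsto (fun x : ℝ => Real.log (Q.eval x / x ^ n)) atTop (nhds 0) := by
    have := (Real.continuousAt_log one_ne_zero).tendsto.comp hA
    rwa [Real.log_one] at this
  -- Q eventually positive
  have hQtop : Tendsto (fun x : ℝ => Q.eval x) atTop atTop :=
    Polynomial.tendsto_atTop_of_leadingCoeff_nonneg Q
      (by rw [hdegQ]; exact_mod_cast Nat.succ_pos m)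
      (by rw [hQ.leadingCoeff]; norm_num)
  have hQpos : ∀ᶠ x : ℝ in atTop, 0 < Q.eval x := hQtop.eventually (eventually_gt_atTop 0)
  -- assemble
  set g : ℝ → ℝ := fun x => Real.log (Q.eval x / x ^ n)
      - Real.log x * (P.eval x / Q.eval x) - c * (P.eval x / Q.eval x) - c * n with hg
  have hgt : Tendsto g atTop (nhds (-(c * n))) := by
    have := ((hA'.sub hlogB).sub (hB.const_mul c)).sub_const (c * n)
    simpa using this
  have hexp : Tendsto (fun x => Real.exp (g x)) atTop (nhds (Real.exp (-(c * n)))) :=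
    (Real.continuous_exp.tendsto _).comp hgt
  have heq : ∀ᶠ x : ℝ in atTop, Real.exp (g x) = Q.eval x *
      Real.exp (-((x * Real.log x + c * x) *
        ((derivative Q).eval x / Q.eval x))) := by
    filter_upwards [hQpos, eventually_gt_atTop (0 : ℝ)] with x hQx hx
    have hxn : (x : ℝ) ^ n ≠ 0 := by positivity
    have hPev : P.eval x = x * (derivative Q).eval x - n * Q.eval x := by
      simp [hP]
    have hgx : g x = Real.log (Q.eval x) + -((x * Real.log x + c * x) *
        ((derivative Q).eval x / Q.eval x)) := by
      rw [hg]
      simp only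
      rw [Real.log_div hQx.ne' hxn, Real.log_pow, hPev]
      field_simp
      ring
    rw [hgx, Real.exp_add, Real.exp_log hQx]
  have hreal : Tendsto (fun x : ℝ => Q.eval x *
      Real.exp (-((x * Real.log x + c * x) *
        ((derivative Q).eval x / Q.eval x)))) atTop (nhds (Real.exp (-(c * n)))) :=
    hexp.congr' heq
  exact hreal.comp tendsto_natCast_atTop_atTop
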